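/- arXiv:2605.11172 — 3 statements merged into one kernel-verified Lean document; each statement's English description precedes it below -/
import Mathlib

section
/- If h : ℝⁿ → ℝ ∪ {∞} is proper, closed, and μ-strongly convex with respect to a norm ‖·‖, then its Fenchel conjugate h* is everywhere finite, differentiable, and (1/μ)-smooth with respect to the dual norm: for all θ, θ', h*(θ') ≤ h*(θ) + ⟨θ'−θ, ∇h*(θ)⟩ + (1/(2μ))‖θ'−θ‖_*². -/
open RealInnerProductSpace

theorem lscMinAux {β : Type*} [TopologicalSpace β] {K : Set β} (hK : IsCompact K)
    (hne : K.Nonempty) {f : β → EReal} (hf : LowerSemicontinuous f) :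
    ∃ x ∈ K, ∀ y ∈ K, f x ≤ f y := by
  by_contra hcon
  push_neg at hcon
  set m := sInf (f '' K) with hm
  have hcover : K ⊆ ⋃ c : {c : EReal // m < c}, f ⁻¹' Set.Ioi (c : EReal) := by
    intro x hx
    have hmx : m ≤ f x := sInf_le ⟨x, hx, rfl⟩
    have hlt : m < f x := by
      rcases eq_or_lt_of_le hmx with he | hl
      · exfalso
        obtain ⟨y, hy, hyx⟩ := hcon x hx
        have : f y < m := he ▸ hyx
        exact absurd (sInf_le ⟨y, hy, rfl⟩ : m ≤ f y) (not_le.2 this)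
      · exact hl
    obtain ⟨c, hc1, hc2⟩ := exists_between hlt
    exact Set.mem_iUnion.2 ⟨⟨c, hc1⟩, hc2⟩
  obtain ⟨t, ht⟩ := hK.elim_finite_subcover _
    (fun c : {c : EReal // m < c} => hf.isOpen_preimage (c : EReal)) hcover
  obtain ⟨x₀, hx₀⟩ := hne
  obtain ⟨c₀, hc₀t, _⟩ := Set.mem_iUnion₂.1 (ht hx₀)
  have htne : t.Nonempty := ⟨c₀, hc₀t⟩
  set cm := t.inf' htne (fun c => (c : EReal)) with hcm
  have hmcm : m < cm := by
    rw [hcm, Finset.lt_inf'_iff]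
    exact fun c _ => c.2
  have : cm ≤ m := by
    apply le_sInf
    rintro z ⟨x, hx, rfl⟩
    obtain ⟨c, hct, hcx⟩ := Set.mem_iUnion₂.1 (ht hx)
    exact le_of_lt (lt_of_le_of_lt (Finset.inf'_le _ hct) hcx)
  exact absurd (lt_of_lt_of_le hmcm this) (lt_irrefl m)


theorem normUB {n : ℕ} (N : EuclideanSpace ℝ (Fin n) → ℝ)
    (hN1 : ∀ x y, N (x + y) ≤ N x + N y)
    (hN2 : ∀ (t : ℝ) (x : EuclideanSpace ℝ (Fin n)), N (t • x) = |t| * N x) :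
    ∃ b : ℝ, 0 < b ∧ ∀ x, N x ≤ b * ‖x‖ := by
  have hN0 : N 0 = 0 := by
    have := hN2 0 0
    simpa using this
  have hneg : ∀ x, N (-x) = N x := by
    intro x
    have := hN2 (-1) x
    simpa using this
  have hNnonneg : ∀ x, 0 ≤ N x := by
    intro x
    have h1 := hN1 x (-x)
    simp [hN0, hneg] at h1
    linarith
  have hsum : ∀ (s : Finset (Fin n)) (f : Fin n → EuclideanSpace ℝ (Fin n)),
      N (∑ i ∈ s, f i) ≤ ∑ i ∈ s, N (f i) := by
    intro s f
    induction s using Finset.induction_on with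
    | empty => simp [hN0]
    | @insert a s' hx ih =>
      rw [Finset.sum_insert hx, Finset.sum_insert hx]
      exact le_trans (hN1 _ _) (by linarith)
  have hdecomp : ∀ x : EuclideanSpace ℝ (Fin n),
      x = ∑ i : Fin n, x i • EuclideanSpace.single i (1:ℝ) := by
    intro x
    ext j
    rw [WithLp.ofLp_sum, Fintype.sum_apply]
    simp [EuclideanSpace.single_apply]
  have habs : ∀ (x : EuclideanSpace ℝ (Fin n)) (i : Fin n), |x i| ≤ ‖x‖ := by
    intro x i
    rw [EuclideanSpace.norm_eq]
    rw [show |x i| = Real.sqrt ((x i)^2) by rw [Real.sqrt_sq_eq_abs]]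
    apply Real.sqrt_le_sqrt
    calc (x i)^2 = ‖x i‖^2 := by rw [Real.norm_eq_abs, sq_abs]
    _ ≤ ∑ j : Fin n, ‖x j‖^2 :=
      Finset.single_le_sum (f := fun j => ‖x j‖^2) (fun j _ => sq_nonneg _) (Finset.mem_univ i)
  have hsumnn : 0 ≤ ∑ i : Fin n, N (EuclideanSpace.single i (1:ℝ)) :=
    Finset.sum_nonneg (fun i _ => hNnonneg _)
  refine ⟨1 + ∑ i : Fin n, N (EuclideanSpace.single i (1:ℝ)), by linarith, ?_⟩
  intro x
  calc N x = N (∑ i : Fin n, x i • EuclideanSpace.single i (1:ℝ)) := by rw [← hdecomp]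
  _ ≤ ∑ i : Fin n, N (x i • EuclideanSpace.single i (1:ℝ)) := hsum _ _
  _ = ∑ i : Fin n, |x i| * N (EuclideanSpace.single i (1:ℝ)) := by
      simp [hN2]
  _ ≤ ∑ i : Fin n, ‖x‖ * N (EuclideanSpace.single i (1:ℝ)) := by
      apply Finset.sum_le_sum
      intro i _
      exact mul_le_mul_of_nonneg_right (habs x i) (hNnonneg _)
  _ = (∑ i : Fin n, N (EuclideanSpace.single i (1:ℝ))) * ‖x‖ := by
      rw [Finset.sum_mul]; congr 1; ext i; ring
  _ ≤ (1 + ∑ i : Fin n, N (EuclideanSpace.single i (1:ℝ))) * ‖x‖ := by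
      apply mul_le_mul_of_nonneg_right _ (norm_nonneg x)
      linarith

theorem normLB {n : ℕ} (N : EuclideanSpace ℝ (Fin n) → ℝ)
    (hN1 : ∀ x y, N (x + y) ≤ N x + N y)
    (hN2 : ∀ (t : ℝ) (x : EuclideanSpace ℝ (Fin n)), N (t • x) = |t| * N x)
    (hN3 : ∀ x, N x = 0 ↔ x = 0) :
    ∃ a : ℝ, 0 < a ∧ ∀ x, a * ‖x‖ ≤ N x := by
  obtain ⟨b, hb, hbN⟩ := normUB N hN1 hN2
  have hneg : ∀ x, N (-x) = N x := by
    intro x; have := hN2 (-1) x; simpa using this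
  have hN0 : N 0 = 0 := (hN3 0).2 rfl
  have hNnonneg : ∀ x, 0 ≤ N x := by
    intro x
    have h1 := hN1 x (-x)
    simp [hN0, hneg] at h1
    linarith
  have hcont : Continuous N := by
    apply (LipschitzWith.of_dist_le_mul (K := b.toNNReal) ?_).continuous
    intro x y
    rw [Real.coe_toNNReal _ hb.le]
    rw [Real.dist_eq, dist_eq_norm]
    rcases abs_cases (N x - N y) with ⟨he, _⟩ | ⟨he, _⟩ <;> rw [he]
    · have h1 := hN1 (x - y) y
      rw [sub_add_cancel] at h1
      linarith [hbN (x - y)]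
    · have h1 := hN1 (y - x) x
      rw [sub_add_cancel] at h1
      have h2 : N (y - x) = N (x - y) := by rw [← hneg (x-y)]; congr 1; abel
      have h3 : ‖y - x‖ = ‖x - y‖ := norm_sub_rev y x
      rw [h2] at h1
      rw [← h3] at *
      linarith [hbN (y - x), h2 ▸ hbN (y - x)]
  by_cases hall : ∀ x : EuclideanSpace ℝ (Fin n), x = 0
  · refine ⟨1, one_pos, fun x => ?_⟩
    rw [hall x]
    simp [hN0]
  · push_neg at hall
    obtain ⟨x₁, hx₁⟩ := hall
    have hsne : (Metric.sphere (0 : EuclideanSpace ℝ (Fin n)) 1).Nonempty := by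
      refine ⟨‖x₁‖⁻¹ • x₁, ?_⟩
      simp [norm_smul, inv_mul_cancel₀ (norm_ne_zero_iff.2 hx₁)]
    obtain ⟨u, hu, humin⟩ := (isCompact_sphere (0 : EuclideanSpace ℝ (Fin n)) 1).exists_isMinOn
      hsne hcont.continuousOn
    have huu : ‖u‖ = 1 := by simpa using hu
    have ha : 0 < N u := by
      rcases lt_or_eq_of_le (hNnonneg u) with hl | he
      · exact hl
      · exfalso
        have : u = 0 := (hN3 u).1 he.symm
        rw [this] at huu; simp at huu
    refine ⟨N u, ha, fun x => ?_⟩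
    by_cases hx : x = 0
    · simp [hx, hN0]
    · have hnx : (0:ℝ) < ‖x‖ := norm_pos_iff.2 hx
      have hmem : ‖x‖⁻¹ • x ∈ Metric.sphere (0 : EuclideanSpace ℝ (Fin n)) 1 := by
        simp [norm_smul, inv_mul_cancel₀ hnx.ne']
      have hle : N u ≤ N (‖x‖⁻¹ • x) := humin hmem
      have hNval : N (‖x‖⁻¹ • x) = ‖x‖⁻¹ * N x := by
        rw [hN2]; congr 1; rw [abs_of_pos (inv_pos.2 hnx)]
      rw [hNval] at hle
      calc N u * ‖x‖ ≤ (‖x‖⁻¹ * N x) * ‖x‖ := mul_le_mul_of_nonneg_right hle hnx.le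
      _ = N x := by field_simp

theorem dualFacts {n : ℕ} (N Nd : EuclideanSpace ℝ (Fin n) → ℝ)
    (hN2 : ∀ (t : ℝ) (x : EuclideanSpace ℝ (Fin n)), N (t • x) = |t| * N x)
    (hN3 : ∀ x, N x = 0 ↔ x = 0)
    (hNd : ∀ s, Nd s = sSup ((fun v => ⟪s, v⟫) '' {v | N v ≤ 1}))
    (a : ℝ) (ha : 0 < a) (haN : ∀ x, a * ‖x‖ ≤ N x)
    (hNnonneg : ∀ x, 0 ≤ N x) :
    (∀ s, 0 ≤ Nd s) ∧ (∀ s v, ⟪s, v⟫ ≤ Nd s * N v) ∧ (∀ s, Nd s ≤ ‖s‖ / a) := by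
  have hN0 : N 0 = 0 := (hN3 0).2 rfl
  have hbdd : ∀ s : EuclideanSpace ℝ (Fin n),
      BddAbove ((fun v => ⟪s, v⟫) '' {v | N v ≤ 1}) := by
    intro s
    refine ⟨‖s‖ / a, ?_⟩
    rintro z ⟨v, hv, rfl⟩
    have hv1 : ‖v‖ ≤ 1 / a := by
      have := haN v
      rw [le_div_iff₀ ha]
      calc ‖v‖ * a = a * ‖v‖ := by ring
      _ ≤ N v := haN v
      _ ≤ 1 := hv
    calc ⟪s, v⟫ ≤ ‖s‖ * ‖v‖ := real_inner_le_norm s v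
    _ ≤ ‖s‖ * (1 / a) := mul_le_mul_of_nonneg_left hv1 (norm_nonneg s)
    _ = ‖s‖ / a := by ring
  have h0mem : ∀ s : EuclideanSpace ℝ (Fin n),
      (0:ℝ) ∈ ((fun v => ⟪s, v⟫) '' {v | N v ≤ 1}) := by
    intro s
    exact ⟨0, by simp [hN0], by simp⟩
  have hnn : ∀ s, 0 ≤ Nd s := by
    intro s
    rw [hNd s]
    exact le_csSup (hbdd s) (h0mem s)
  refine ⟨hnn, ?_, ?_⟩
  · intro s v
    by_cases hv : v = 0
    · subst hv
      simp only [inner_zero_right]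
      exact mul_nonneg (hnn s) (hNnonneg 0)
    · have hNv : 0 < N v := by
        rcases lt_or_eq_of_le (hNnonneg v) with hl | he
        · exact hl
        · exact absurd ((hN3 v).1 he.symm) hv
      have hmem : (N v)⁻¹ • v ∈ {v | N v ≤ 1} := by
        simp only [Set.mem_setOf_eq, hN2, abs_of_pos (inv_pos.2 hNv)]
        rw [inv_mul_cancel₀ hNv.ne']
      have hle : ⟪s, (N v)⁻¹ • v⟫ ≤ Nd s := by
        rw [hNd s]
        exact le_csSup (hbdd s) ⟨_, hmem, rfl⟩
      rw [real_inner_smul_right] at hle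
      have := mul_le_mul_of_nonneg_right hle hNv.le
      calc ⟪s, v⟫ = ((N v)⁻¹ * ⟪s, v⟫) * N v := by field_simp
      _ ≤ Nd s * N v := this
  · intro s
    rw [hNd s]
    apply csSup_le ⟨0, h0mem s⟩
    rintro z ⟨v, hv, rfl⟩
    have hv1 : ‖v‖ ≤ 1 / a := by
      rw [le_div_iff₀ ha]
      calc ‖v‖ * a = a * ‖v‖ := by ring
      _ ≤ N v := haN v
      _ ≤ 1 := hv
    calc ⟪s, v⟫ ≤ ‖s‖ * ‖v‖ := real_inner_le_norm s v
    _ ≤ ‖s‖ * (1 / a) := mul_le_mul_of_nonneg_left hv1 (norm_nonneg s)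
    _ = ‖s‖ / a := by ring

set_option maxHeartbeats 2000000 in
/-- If `h : ℝⁿ → ℝ ∪ {∞}` is proper, closed, and `μ`-strongly convex w.r.t. a norm `N`,
then its Fenchel conjugate `C = h*` is everywhere finite, differentiable, and
`(1/μ)`-smooth w.r.t. the dual norm `Nd`:
`h*(θ') ≤ h*(θ) + ⟨θ'-θ, ∇h*(θ)⟩ + (1/(2μ)) Nd(θ'-θ)²`. -/
theorem stmt8 {n : ℕ} (N Nd : EuclideanSpace ℝ (Fin n) → ℝ)
    (hN1 : ∀ x y, N (x + y) ≤ N x + N y)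
    (hN2 : ∀ (t : ℝ) (x : EuclideanSpace ℝ (Fin n)), N (t • x) = |t| * N x)
    (hN3 : ∀ x, N x = 0 ↔ x = 0)
    (hNd : ∀ s, Nd s = sSup ((fun v => ⟪s, v⟫) '' {v | N v ≤ 1}))
    (h : EuclideanSpace ℝ (Fin n) → EReal) (μ : ℝ) (hμ : 0 < μ)
    (hproper₁ : ∀ x, h x ≠ ⊥) (hproper₂ : ∃ x, h x ≠ ⊤)
    (hclosed : LowerSemicontinuous h)
    (hsc : ∀ x y : EuclideanSpace ℝ (Fin n), ∀ t ∈ Set.Icc (0:ℝ) 1,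
      h (t • x + (1 - t) • y) ≤
        (t : EReal) * h x + ((1 - t : ℝ) : EReal) * h y
          - (((μ / 2) * t * (1 - t) * (N (x - y))^2 : ℝ) : EReal))
    (C : EuclideanSpace ℝ (Fin n) → EReal)
    (hC : ∀ θ, C θ = ⨆ x, ((⟪θ, x⟫ : EReal) - h x)) :
    (∀ θ, C θ ≠ ⊤ ∧ C θ ≠ ⊥) ∧
    ∃ g : EuclideanSpace ℝ (Fin n) → EuclideanSpace ℝ (Fin n),
      (∀ θ, HasGradientAt (fun d => (C d).toReal) (g θ) θ) ∧
      (∀ θ θ', (C θ').toReal ≤ (C θ).toReal + ⟪θ' - θ, g θ⟫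
        + (1 / (2 * μ)) * (Nd (θ' - θ))^2) := by
  obtain ⟨a, ha, haN⟩ := normLB N hN1 hN2 hN3
  have hN0 : N 0 = 0 := (hN3 0).2 rfl
  have hNnonneg : ∀ x, 0 ≤ N x := fun x =>
    le_trans (by positivity) (haN x)
  obtain ⟨hNdnn, hNdinner, hNdle⟩ := dualFacts N Nd hN2 hN3 hNd a ha haN hNnonneg
  obtain ⟨μ', hμ'def⟩ : ∃ μ' : ℝ, μ' = μ * a^2 := ⟨_, rfl⟩
  have hμ' : 0 < μ' := by rw [hμ'def]; positivity
  have hNsq : ∀ x : EuclideanSpace ℝ (Fin n), μ'/2 * ‖x‖^2 ≤ μ/2 * (N x)^2 := by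
    intro x
    have h1 := haN x
    have h2 : (a*‖x‖)*(a*‖x‖) ≤ N x * N x :=
      mul_le_mul h1 h1 (by positivity) (hNnonneg x)
    rw [hμ'def]
    nlinarith [h2, hμ.le]
  obtain ⟨x₀, hx₀⟩ := hproper₂
  obtain ⟨r₀, hx₀r⟩ : ∃ r₀ : ℝ, h x₀ = (r₀ : EReal) :=
    ⟨(h x₀).toReal, (EReal.coe_toReal hx₀ (hproper₁ x₀)).symm⟩
  -- lower bound on unit ball
  obtain ⟨z₁, hz₁mem, hz₁min⟩ := lscMinAux (isCompact_closedBall x₀ 1)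
    ⟨x₀, Metric.mem_closedBall_self zero_le_one⟩ hclosed
  have hz₁top : h z₁ ≠ ⊤ := by
    intro hcon
    have h1 := hz₁min x₀ (Metric.mem_closedBall_self zero_le_one)
    rw [hcon, hx₀r] at h1
    exact EReal.coe_ne_top r₀ (top_le_iff.1 h1)
  obtain ⟨m, hz₁r⟩ : ∃ m : ℝ, h z₁ = (m : EReal) :=
    ⟨(h z₁).toReal, (EReal.coe_toReal hz₁top (hproper₁ z₁)).symm⟩
  have hball : ∀ y ∈ Metric.closedBall x₀ 1, (m : EReal) ≤ h y := fun y hy =>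
    hz₁r ▸ hz₁min y hy
  -- quadratic lower bound
  obtain ⟨α, hα⟩ : ∃ α : ℝ, α = min r₀ (m - μ'/2) := ⟨_, rfl⟩
  obtain ⟨β, hβ⟩ : ∃ β : ℝ, β = |m - r₀ - μ'/2| := ⟨_, rfl⟩
  have hβnn : 0 ≤ β := hβ ▸ abs_nonneg _
  have hαr₀ : α ≤ r₀ := hα ▸ min_le_left _ _
  have hαm : α ≤ m - μ'/2 := hα ▸ min_le_right _ _
  have hcβ : -β ≤ m - r₀ - μ'/2 := hβ ▸ neg_abs_le _
  have hLB : ∀ y, ((α - β*‖y-x₀‖ + μ'/2*‖y-x₀‖^2 : ℝ) : EReal) ≤ h y := by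
    intro y
    obtain ⟨D, hD⟩ : ∃ D : ℝ, D = ‖y - x₀‖ := ⟨_, rfl⟩
    rw [← hD]
    have hD0 : 0 ≤ D := hD ▸ norm_nonneg _
    by_cases hy1 : D ≤ 1
    · refine le_trans ?_ (hball y ?_)
      · rw [EReal.coe_le_coe_iff]
        have h2 : 0 ≤ β * D := mul_nonneg hβnn hD0
        have hD2 : D^2 ≤ 1 := by nlinarith
        nlinarith [mul_le_mul_of_nonneg_left hD2 (le_of_lt (half_pos hμ'))]
      · rw [Metric.mem_closedBall, dist_eq_norm, ← hD]; exact hy1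
    · push_neg at hy1
      by_cases hytop : h y = ⊤
      · rw [hytop]; exact le_top
      obtain ⟨ry, hyr⟩ : ∃ ry : ℝ, h y = (ry : EReal) :=
        ⟨(h y).toReal, (EReal.coe_toReal hytop (hproper₁ y)).symm⟩
      have hDpos : (0:ℝ) < D := lt_trans one_pos hy1
      obtain ⟨t, htdef⟩ : ∃ t : ℝ, t = D⁻¹ := ⟨_, rfl⟩
      have ht0 : 0 < t := htdef ▸ inv_pos.2 hDpos
      have ht1 : t < 1 := htdef ▸ inv_lt_one_of_one_lt₀ hy1
      have hDt : D * t = 1 := by rw [htdef]; exact mul_inv_cancel₀ hDpos.ne'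
      have hsc' := hsc y x₀ t ⟨ht0.le, ht1.le⟩
      have hzx : t • y + (1-t) • x₀ - x₀ = t • (y - x₀) := by
        rw [smul_sub, sub_smul, one_smul]; abel
      have hzball : t • y + (1-t) • x₀ ∈ Metric.closedBall x₀ 1 := by
        rw [Metric.mem_closedBall, dist_eq_norm, hzx, norm_smul]
        rw [Real.norm_eq_abs, abs_of_pos ht0, ← hD]
        nlinarith
      have hmz : (m : EReal) ≤ h (t • y + (1-t) • x₀) := hball _ hzball
      rw [hyr, hx₀r] at hsc'
      have hRHS : (t : EReal) * ((ry : ℝ) : EReal) + ((1 - t : ℝ) : EReal) * ((r₀:ℝ) : EReal)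
          - ((μ/2 * t * (1-t) * (N (y - x₀))^2 : ℝ) : EReal)
          = ((t*ry + (1-t)*r₀ - μ/2*t*(1-t)*(N (y-x₀))^2 : ℝ) : EReal) := by
        rw [← EReal.coe_mul, ← EReal.coe_mul, ← EReal.coe_add, ← EReal.coe_sub]
      rw [hRHS] at hsc'
      have hkey : m ≤ t*ry + (1-t)*r₀ - μ/2*t*(1-t)*(N (y-x₀))^2 :=
        EReal.coe_le_coe_iff.1 (le_trans hmz hsc')
      rw [hyr, EReal.coe_le_coe_iff]
      have hNsq' : μ'/2*D^2 ≤ μ/2*(N (y-x₀))^2 := by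
        rw [hD]; exact hNsq _
      have ht1' : 0 < t*(1-t) := mul_pos ht0 (by linarith)
      have h6 := mul_le_mul_of_nonneg_left hNsq' ht1'.le
      have hkey2 : m ≤ t*ry + (1-t)*r₀ - μ'/2*(t*(1-t))*D^2 := by nlinarith
      have hexp : D * (t*ry + (1-t)*r₀ - μ'/2*(t*(1-t))*D^2)
          = ry + (D-1)*r₀ - (μ'/2)*(D^2-D) := by
        have ht' : t = D⁻¹ := htdef
        rw [ht']
        field_simp
      have hkey3 : D*m ≤ ry + (D-1)*r₀ - (μ'/2)*(D^2-D) := by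
        rw [← hexp]
        exact mul_le_mul_of_nonneg_left hkey2 hDpos.le
      have hβD := mul_le_mul_of_nonneg_right hcβ hDpos.le
      nlinarith [hkey3, hβD, hαr₀]
  -- main existence of minimizers
  have hmain : ∀ θ : EuclideanSpace ℝ (Fin n), ∃ x, h x ≠ ⊤ ∧
      ∀ y, h x - ((⟪θ, x⟫ : ℝ) : EReal) ≤ h y - ((⟪θ, y⟫ : ℝ) : EReal) := by
    intro θ
    set G : EuclideanSpace ℝ (Fin n) → EReal :=
      fun y => h y - ((⟪θ, y⟫ : ℝ) : EReal) with hG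
    have hGdef : ∀ y, G y = h y - ((⟪θ, y⟫ : ℝ) : EReal) := fun y => rfl
    clear_value G
    have hGlsc : LowerSemicontinuous G := by
      have hGeq : G = fun y => h y + (((-⟪θ, y⟫ : ℝ)) : EReal) := by
        funext y
        rw [hGdef y, sub_eq_add_neg, EReal.coe_neg]
      rw [hGeq]
      apply LowerSemicontinuous.add' hclosed
      · exact (continuous_coe_real_ereal.comp
          ((continuous_const.inner continuous_id').neg)).lowerSemicontinuous
      · intro x
        by_cases hxt : h x = ⊤
        · rw [hxt]; exact EReal.continuousAt_add_top_coe _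
        · rw [(EReal.coe_toReal hxt (hproper₁ x)).symm]
          exact EReal.continuousAt_add_coe_coe _ _
    obtain ⟨Kc, hKc⟩ : ∃ Kc : ℝ, Kc = |r₀| + 2*‖θ‖*‖x₀‖ + |α| + 1 := ⟨_, rfl⟩
    have hKc0 : 0 < Kc := by
      rw [hKc]
      have h1 := abs_nonneg r₀
      have h2 := abs_nonneg α
      have h3 : 0 ≤ 2*‖θ‖*‖x₀‖ := by positivity
      linarith
    have hKcb : r₀ + 2*‖θ‖*‖x₀‖ - α + 1 ≤ Kc := by
      rw [hKc]
      linarith [le_abs_self r₀, neg_abs_le α]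
    obtain ⟨R, hR⟩ : ∃ R : ℝ, R = 1 + (2/μ')*(β + ‖θ‖ + Kc) := ⟨_, rfl⟩
    have hR1 : 1 ≤ R := by
      rw [hR]
      have h1 : 0 ≤ (2/μ')*(β + ‖θ‖ + Kc) := by positivity
      linarith
    have hR0 : 0 < R := by linarith
    have h6 : β + ‖θ‖ + Kc ≤ (μ'/2)*R := by
      rw [hR]
      have he : (μ'/2)*(1 + (2/μ')*(β + ‖θ‖ + Kc)) = μ'/2 + (β + ‖θ‖ + Kc) := by
        field_simp
      rw [he]
      linarith
    obtain ⟨xs, hxsmem, hxsmin⟩ := lscMinAux (isCompact_closedBall x₀ R)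
      ⟨x₀, Metric.mem_closedBall_self hR0.le⟩ hGlsc
    have hGx₀ : G x₀ = ((r₀ - ⟪θ, x₀⟫ : ℝ) : EReal) := by
      rw [hGdef, hx₀r, ← EReal.coe_sub]
    have houtside : ∀ y, R < ‖y - x₀‖ → G x₀ ≤ G y := by
      intro y hy
      obtain ⟨D, hD⟩ : ∃ D : ℝ, D = ‖y - x₀‖ := ⟨_, rfl⟩
      rw [← hD] at hy
      have hD1 : 1 ≤ D := le_trans hR1 hy.le
      have hD0 : 0 < D := lt_of_lt_of_le one_pos hD1
      have h1 : ((α - β*D + μ'/2*D^2 - ⟪θ, y⟫ : ℝ) : EReal) ≤ G y := by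
        rw [hGdef]
        rw [show ((α - β*D + μ'/2*D^2 - ⟪θ, y⟫ : ℝ) : EReal)
            = ((α - β*D + μ'/2*D^2 : ℝ) : EReal) - ((⟪θ, y⟫ : ℝ) : EReal) from
          by rw [← EReal.coe_sub]]
        exact EReal.sub_le_sub (hD ▸ hLB y) (le_refl _)
      refine le_trans ?_ h1
      rw [hGx₀, EReal.coe_le_coe_iff]
      have h2 : ⟪θ, y⟫ ≤ ‖θ‖ * ‖y‖ := real_inner_le_norm θ y
      have h3 : ‖y‖ ≤ D + ‖x₀‖ := by
        rw [hD]
        calc ‖y‖ = ‖(y - x₀) + x₀‖ := by rw [sub_add_cancel]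
        _ ≤ ‖y - x₀‖ + ‖x₀‖ := norm_add_le _ _
      have h3' : ‖θ‖*‖y‖ ≤ ‖θ‖*(D + ‖x₀‖) :=
        mul_le_mul_of_nonneg_left h3 (norm_nonneg θ)
      have hθy : ⟪θ, y⟫ ≤ ‖θ‖*D + ‖θ‖*‖x₀‖ := by nlinarith
      have h4 : -(‖θ‖*‖x₀‖) ≤ ⟪θ, x₀⟫ := by
        have h5 := abs_le.1 (abs_real_inner_le_norm θ x₀)
        linarith [h5.1]
      have h5 : (μ'/2)*R ≤ (μ'/2)*D := by
        apply mul_le_mul_of_nonneg_left hy.le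
        positivity
      have h7 : (β + ‖θ‖ + Kc)*D ≤ ((μ'/2)*D)*D := by
        apply mul_le_mul_of_nonneg_right _ hD0.le
        linarith
      have h10 : Kc ≤ Kc * D := by nlinarith
      nlinarith [h7, h10, hKcb, h4, hθy]
    refine ⟨xs, ?_, ?_⟩
    · intro hcon
      have h1 : G xs ≤ G x₀ := hxsmin x₀ (Metric.mem_closedBall_self hR0.le)
      rw [hGx₀] at h1
      have h2 : G xs = ⊤ := by
        rw [hGdef, hcon]; exact EReal.top_sub_coe _
      rw [h2] at h1
      exact EReal.coe_ne_top _ (top_le_iff.1 h1)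
    · intro y
      have hxy : G xs ≤ G y := by
        by_cases hyball : y ∈ Metric.closedBall x₀ R
        · exact hxsmin y hyball
        · refine le_trans (hxsmin x₀ (Metric.mem_closedBall_self hR0.le)) ?_
          apply houtside
          rw [Metric.mem_closedBall, dist_eq_norm, not_le] at hyball
          exact hyball
      rw [hGdef, hGdef] at hxy
      exact hxy
  choose g hgtop hgmin using hmain
  have hgr : ∀ θ, h (g θ) = (((h (g θ)).toReal : ℝ) : EReal) := fun θ =>
    (EReal.coe_toReal (hgtop θ) (hproper₁ _)).symm
  set cR : EuclideanSpace ℝ (Fin n) → ℝ :=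
    fun θ => ⟪θ, g θ⟫ - (h (g θ)).toReal with hcR
  have hcRdef : ∀ θ, cR θ = ⟪θ, g θ⟫ - (h (g θ)).toReal := fun θ => rfl
  clear_value cR
  have hCeq : ∀ θ, C θ = ((cR θ : ℝ) : EReal) := by
    intro θ
    rw [hC θ]
    apply le_antisymm
    · apply iSup_le
      intro y
      by_cases hyt : h y = ⊤
      · rw [hyt, EReal.sub_top]; exact bot_le
      · obtain ⟨ry, hyr⟩ : ∃ ry : ℝ, h y = (ry : EReal) :=
          ⟨(h y).toReal, (EReal.coe_toReal hyt (hproper₁ y)).symm⟩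
        have hmin := hgmin θ y
        rw [hgr θ, hyr, ← EReal.coe_sub, ← EReal.coe_sub] at hmin
        have hreal := EReal.coe_le_coe_iff.1 hmin
        rw [hyr, ← EReal.coe_sub, EReal.coe_le_coe_iff, hcRdef]
        linarith
    · have heq : ((cR θ : ℝ) : EReal) = ((⟪θ, g θ⟫ : ℝ) : EReal) - h (g θ) := by
        rw [hgr θ, ← EReal.coe_sub, hcRdef]
      rw [heq]
      exact le_iSup (fun x => ((⟪θ, x⟫ : ℝ) : EReal) - h x) (g θ)
  have hCtoReal : ∀ θ, (C θ).toReal = cR θ := by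
    intro θ; rw [hCeq θ]; exact EReal.toReal_coe _
  -- strong subgradient inequality
  have hkeySG : ∀ θ y, h y ≠ ⊤ →
      (h (g θ)).toReal + ⟪θ, y - g θ⟫ + μ/2*(N (y - g θ))^2 ≤ (h y).toReal := by
    intro θ y hyt
    have hgrθ := hgr θ
    obtain ⟨rx, hrx⟩ : ∃ rx : ℝ, (h (g θ)).toReal = rx := ⟨_, rfl⟩
    rw [hrx] at hgrθ ⊢
    obtain ⟨ry, hyr⟩ : ∃ ry : ℝ, h y = (ry : EReal) :=
      ⟨(h y).toReal, (EReal.coe_toReal hyt (hproper₁ y)).symm⟩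
    have hryr : (h y).toReal = ry := by rw [hyr]; exact EReal.toReal_coe _
    rw [hryr]
    obtain ⟨Nv, hNv⟩ : ∃ Nv : ℝ, Nv = N (y - g θ) := ⟨_, rfl⟩
    rw [← hNv]
    have hstep : ∀ t : ℝ, 0 < t → t < 1 →
        ⟪θ, y - g θ⟫ + μ/2*(1-t)*Nv^2 ≤ ry - rx := by
      intro t ht0 ht1
      have hsc' := hsc y (g θ) t ⟨ht0.le, ht1.le⟩
      rw [hyr, hgrθ, ← hNv] at hsc'
      have hRHS : (t : EReal) * ((ry : ℝ) : EReal) + ((1 - t : ℝ) : EReal) * ((rx:ℝ) : EReal)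
          - ((μ/2 * t * (1-t) * Nv^2 : ℝ) : EReal)
          = ((t*ry + (1-t)*rx - μ/2*t*(1-t)*Nv^2 : ℝ) : EReal) := by
        rw [← EReal.coe_mul, ← EReal.coe_mul, ← EReal.coe_add, ← EReal.coe_sub]
      rw [hRHS] at hsc'
      have hztop : h (t • y + (1-t) • g θ) ≠ ⊤ := by
        intro hcon
        rw [hcon] at hsc'
        exact EReal.coe_ne_top _ (top_le_iff.1 hsc')
      obtain ⟨rz, hzr⟩ : ∃ rz : ℝ, h (t • y + (1-t) • g θ) = (rz : EReal) :=
        ⟨_, (EReal.coe_toReal hztop (hproper₁ _)).symm⟩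
      rw [hzr] at hsc'
      have hzb : rz ≤ t*ry + (1-t)*rx - μ/2*t*(1-t)*Nv^2 :=
        EReal.coe_le_coe_iff.1 hsc'
      have hmin := hgmin θ (t • y + (1-t) • g θ)
      rw [hgrθ, hzr, ← EReal.coe_sub, ← EReal.coe_sub] at hmin
      have hminr : rx - ⟪θ, g θ⟫ ≤ rz - ⟪θ, t • y + (1-t) • g θ⟫ :=
        EReal.coe_le_coe_iff.1 hmin
      have hinner : ⟪θ, t • y + (1-t) • g θ⟫ = t*⟪θ, y⟫ + (1-t)*⟪θ, g θ⟫ := by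
        rw [inner_add_right, real_inner_smul_right, real_inner_smul_right]
      rw [hinner] at hminr
      have hinner2 : ⟪θ, y - g θ⟫ = ⟪θ, y⟫ - ⟪θ, g θ⟫ := inner_sub_right θ y (g θ)
      have hfin : t*(⟪θ, y⟫ - ⟪θ, g θ⟫ + μ/2*(1-t)*Nv^2) ≤ t*(ry - rx) := by nlinarith
      have hdiv := le_of_mul_le_mul_left hfin ht0
      linarith
    apply le_of_forall_pos_le_add
    intro ε hε
    have hden : (0:ℝ) < 1 + μ/2*Nv^2 := by positivity
    obtain ⟨t, ht⟩ : ∃ t : ℝ, t = min (1/2) (ε/(1 + μ/2*Nv^2)) := ⟨_, rfl⟩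
    have ht0 : 0 < t := ht ▸ lt_min (by norm_num) (div_pos hε hden)
    have ht1 : t < 1 := ht ▸ lt_of_le_of_lt (min_le_left _ _) (by norm_num)
    have hs := hstep t ht0 ht1
    have htb : t*(1 + μ/2*Nv^2) ≤ ε := by
      have h1 : t ≤ ε/(1 + μ/2*Nv^2) := ht ▸ min_le_right _ _
      calc t*(1 + μ/2*Nv^2) ≤ (ε/(1 + μ/2*Nv^2))*(1 + μ/2*Nv^2) :=
        mul_le_mul_of_nonneg_right h1 hden.le
      _ = ε := div_mul_cancel₀ _ hden.ne'
    nlinarith [hs, htb, ht0.le, sq_nonneg Nv, hμ.le]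
  -- smoothness inequality
  have hsmooth : ∀ θ θ', cR θ' ≤ cR θ + ⟪θ' - θ, g θ⟫ + (1/(2*μ)) * (Nd (θ' - θ))^2 := by
    intro θ θ'
    have hkey := hkeySG θ (g θ') (hgtop θ')
    have hbound : ⟪θ' - θ, g θ' - g θ⟫ ≤ Nd (θ' - θ) * N (g θ' - g θ) :=
      hNdinner (θ' - θ) (g θ' - g θ)
    have hamgm : Nd (θ' - θ) * N (g θ' - g θ)
        ≤ (1/(2*μ))*(Nd (θ' - θ))^2 + μ/2*(N (g θ' - g θ))^2 := by
      have he : 2*μ*((1/(2*μ))*(Nd (θ' - θ))^2 + μ/2*(N (g θ' - g θ))^2)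
          = (Nd (θ' - θ))^2 + μ^2*(N (g θ' - g θ))^2 := by
        field_simp
      have h2 : 2*μ*(Nd (θ' - θ) * N (g θ' - g θ))
          ≤ 2*μ*((1/(2*μ))*(Nd (θ' - θ))^2 + μ/2*(N (g θ' - g θ))^2) := by
        rw [he]
        nlinarith [sq_nonneg (Nd (θ' - θ) - μ*N (g θ' - g θ))]
      exact le_of_mul_le_mul_left h2 (by positivity)
    have e1 : ⟪θ' - θ, g θ'⟫ = ⟪θ', g θ'⟫ - ⟪θ, g θ'⟫ := inner_sub_left θ' θ (g θ')
    have e1' : ⟪θ' - θ, g θ⟫ = ⟪θ', g θ⟫ - ⟪θ, g θ⟫ := inner_sub_left θ' θ (g θ)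
    have e2 : ⟪θ' - θ, g θ' - g θ⟫ = ⟪θ' - θ, g θ'⟫ - ⟪θ' - θ, g θ⟫ :=
      inner_sub_right _ (g θ') (g θ)
    have e3 : ⟪θ, g θ' - g θ⟫ = ⟪θ, g θ'⟫ - ⟪θ, g θ⟫ := inner_sub_right θ (g θ') (g θ)
    rw [hcRdef, hcRdef]
    linarith
  have hlow : ∀ θ θ', cR θ + ⟪θ' - θ, g θ⟫ ≤ cR θ' := by
    intro θ θ'
    have h1 : ((⟪θ', g θ⟫ : ℝ) : EReal) - h (g θ) ≤ C θ' := by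
      rw [hC θ']
      exact le_iSup (fun x => ((⟪θ', x⟫ : ℝ) : EReal) - h x) (g θ)
    rw [hCeq θ', hgr θ, ← EReal.coe_sub] at h1
    have h2 := EReal.coe_le_coe_iff.1 h1
    have e1 : ⟪θ' - θ, g θ⟫ = ⟪θ', g θ⟫ - ⟪θ, g θ⟫ := inner_sub_left θ' θ (g θ)
    rw [hcRdef θ]
    linarith
  refine ⟨fun θ => ⟨by rw [hCeq θ]; exact EReal.coe_ne_top _,
    by rw [hCeq θ]; exact EReal.coe_ne_bot _⟩, g, ?_, ?_⟩
  · intro θ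
    have hfeq : (fun d => (C d).toReal) = cR := funext hCtoReal
    rw [hfeq, hasGradientAt_iff_isLittleO, Asymptotics.isLittleO_iff]
    intro c hc
    obtain ⟨K, hK⟩ : ∃ K : ℝ, K = 1/(2*μ*a^2) := ⟨_, rfl⟩
    have hK0 : 0 < K := by rw [hK]; positivity
    have hδ : 0 < c/K := div_pos hc hK0
    filter_upwards [Metric.ball_mem_nhds θ hδ] with θ' hθ'
    rw [Metric.mem_ball, dist_eq_norm] at hθ'
    have hub := hsmooth θ θ'
    have hlb := hlow θ θ'
    have hNdb : Nd (θ' - θ) ≤ ‖θ' - θ‖/a := hNdle (θ' - θ)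
    have hNdnn' : 0 ≤ Nd (θ' - θ) := hNdnn _
    have hquad : (1/(2*μ)) * (Nd (θ' - θ))^2 ≤ K * ‖θ' - θ‖^2 := by
      rw [hK]
      have h1 : (Nd (θ' - θ))^2 ≤ (‖θ' - θ‖/a)^2 := by nlinarith [norm_nonneg (θ' - θ)]
      have h2 : (0:ℝ) < 1/(2*μ) := by positivity
      calc (1/(2*μ)) * (Nd (θ' - θ))^2 ≤ (1/(2*μ)) * (‖θ' - θ‖/a)^2 :=
        mul_le_mul_of_nonneg_left h1 h2.le
      _ = 1/(2*μ*a^2) * ‖θ' - θ‖^2 := by field_simp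
    have habs : ‖cR θ' - cR θ - ⟪g θ, θ' - θ⟫‖ ≤ K * ‖θ' - θ‖^2 := by
      rw [Real.norm_eq_abs, abs_le]
      have hcomm : ⟪g θ, θ' - θ⟫ = ⟪θ' - θ, g θ⟫ := real_inner_comm _ _
      constructor
      · rw [hcomm]
        nlinarith [mul_nonneg hK0.le (sq_nonneg ‖θ' - θ‖)]
      · rw [hcomm]
        linarith
    calc ‖cR θ' - cR θ - ⟪g θ, θ' - θ⟫‖ ≤ K * ‖θ' - θ‖^2 := habs
    _ = (K * ‖θ' - θ‖) * ‖θ' - θ‖ := by ring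
    _ ≤ c * ‖θ' - θ‖ := by
        apply mul_le_mul_of_nonneg_right _ (norm_nonneg _)
        have h1 : K * ‖θ' - θ‖ ≤ K * (c / K) :=
          mul_le_mul_of_nonneg_left hθ'.le hK0.le
        have h2 : K * (c / K) = c := by field_simp
        linarith
  · intro θ θ'
    rw [hCtoReal, hCtoReal]
    exact hsmooth θ θ'
end

section
/- (ODA regret bound) Let h be proper, closed and μ-strongly convex with respect to ‖·‖, let a_0,…,a_{n−1} > 0 with A_k = Σ_{i≤k} a_i, let η > 0, g^{−1} = 0, and define θ_k = −η Σ_{i=0}^{k} a_i g^i, θ_{−1} = 0, ẑ_k ∈ ∂h*(θ_{k−1} − η a_k g^{k−1}) for k = 0,…,n−1 (so ẑ_0 ∈ ∂h*(0)). Then for every x, Σ_{k=0}^{n−1} a_k ⟨g^k, ẑ_k − x⟩ ≤ (h(x) − inf h)/η + (η/(2μ)) Σ_{k=0}^{n−1} a_k² ‖g^k − g^{k−1}‖_*². -/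
open RealInnerProductSpace

set_option maxHeartbeats 1000000 in
/-- ODA regret bound: with `h` `μ`-strongly convex w.r.t. `N` (attained infimum at `u0`),
positive weights `a`, `η > 0`, `g^{-1} = 0`, and iterates
`ẑ_k ∈ ∂h*(-η (∑_{i<k} a_i g^i + a_k g^{k-1}))` (i.e. maximizers of the linearized
objective), for every comparator `x`:
`∑_k a_k ⟨g^k, ẑ_k - x⟩ ≤ (h x - inf h)/η + (η/(2μ)) ∑_k a_k² ‖g^k - g^{k-1}‖_*²`. -/
theorem stmt9 {d : ℕ} (N Nd : EuclideanSpace ℝ (Fin d) → ℝ)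
    (hN1 : ∀ x y, N (x + y) ≤ N x + N y)
    (hN2 : ∀ (t : ℝ) (x : EuclideanSpace ℝ (Fin d)), N (t • x) = |t| * N x)
    (hN3 : ∀ x, N x = 0 ↔ x = 0)
    (hNd : ∀ s, Nd s = sSup ((fun v => ⟪s, v⟫) '' {v | N v ≤ 1}))
    (h : EuclideanSpace ℝ (Fin d) → ℝ) (μ : ℝ) (hμ : 0 < μ)
    (hsc : ∀ x y : EuclideanSpace ℝ (Fin d), ∀ t ∈ Set.Icc (0:ℝ) 1,
      h (t • x + (1 - t) • y) ≤
        t * h x + (1 - t) * h y - (μ / 2) * t * (1 - t) * (N (x - y))^2)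
    (u0 : EuclideanSpace ℝ (Fin d)) (hu0 : ∀ u, h u0 ≤ h u)
    (n : ℕ) (a : ℕ → ℝ) (ha : ∀ k, 0 < a k) (η : ℝ) (hη : 0 < η)
    (g : ℕ → EuclideanSpace ℝ (Fin d))
    (gprev : ℕ → EuclideanSpace ℝ (Fin d))
    (hgprev : ∀ k, gprev k = if k = 0 then 0 else g (k - 1))
    (z : ℕ → EuclideanSpace ℝ (Fin d))
    (hz : ∀ k < n, ∀ x,
      ⟪(-η) • ((∑ i ∈ Finset.range k, a i • g i) + a k • gprev k), x⟫ - h x ≤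
      ⟪(-η) • ((∑ i ∈ Finset.range k, a i • g i) + a k • gprev k), z k⟫ - h (z k)) :
    ∀ x, ∑ k ∈ Finset.range n, a k * ⟪g k, z k - x⟫ ≤
      (h x - h u0) / η
        + (η / (2 * μ)) * ∑ k ∈ Finset.range n, (a k)^2 * (Nd (g k - gprev k))^2 := by
  -- Basic facts about the norm `N`
  have hN0 : N 0 = 0 := (hN3 0).mpr rfl
  have hNneg : ∀ x, N (-x) = N x := by
    intro x; have := hN2 (-1) x; simpa using this
  have hNnonneg : ∀ x, 0 ≤ N x := by
    intro x
    have hx := hN1 x (-x)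
    rw [add_neg_cancel, hN0, hNneg x] at hx
    linarith
  have hNsum : ∀ (s : Finset (Fin d)) (f : Fin d → EuclideanSpace ℝ (Fin d)),
      N (∑ i ∈ s, f i) ≤ ∑ i ∈ s, N (f i) := by
    intro s f
    induction s using Finset.cons_induction with
    | empty => simp [hN0]
    | cons i s his ih =>
      rw [Finset.sum_cons, Finset.sum_cons]
      exact le_trans (hN1 _ _) (by linarith)
  -- upper norm-equivalence bound
  obtain ⟨C, hC0, hC⟩ : ∃ C : ℝ, 0 ≤ C ∧ ∀ v, N v ≤ C * ‖v‖ := by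
    refine ⟨∑ i, N (EuclideanSpace.single i 1),
      Finset.sum_nonneg fun i _ => hNnonneg _, fun v => ?_⟩
    have hv : v = ∑ i, v i • EuclideanSpace.single i 1 := by
      have := (EuclideanSpace.basisFun (Fin d) ℝ).sum_repr v
      simp only [EuclideanSpace.basisFun_apply, EuclideanSpace.basisFun_repr] at this
      exact this.symm
    have hcoord : ∀ i : Fin d, |v i| ≤ ‖v‖ := by
      intro i
      have h1 : v i = ⟪EuclideanSpace.single i (1:ℝ), v⟫ := by
        simp [EuclideanSpace.inner_single_left]
      have h2 := abs_real_inner_le_norm (EuclideanSpace.single i (1:ℝ)) v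
      rw [EuclideanSpace.norm_single] at h2
      simpa [← h1] using h2
    calc N v = N (∑ i, v i • EuclideanSpace.single i 1) := by rw [← hv]
      _ ≤ ∑ i, N (v i • EuclideanSpace.single i 1) := hNsum _ _
      _ = ∑ i, |v i| * N (EuclideanSpace.single i 1) := by
          exact Finset.sum_congr rfl fun i _ => hN2 _ _
      _ ≤ ∑ i, ‖v‖ * N (EuclideanSpace.single i 1) :=
          Finset.sum_le_sum fun i _ => mul_le_mul_of_nonneg_right (hcoord i) (hNnonneg _)
      _ = (∑ i, N (EuclideanSpace.single i 1)) * ‖v‖ := by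
          rw [← Finset.mul_sum, mul_comm]
  -- continuity of N
  have hNcont : Continuous N := by
    have hlip : LipschitzWith (Real.toNNReal C) N := by
      apply LipschitzWith.of_dist_le_mul
      intro x y
      rw [Real.dist_eq, dist_eq_norm, Real.coe_toNNReal C hC0]
      have hsym : N (y - x) = N (x - y) := by rw [← hNneg (x - y), neg_sub]
      have h1 : N x - N y ≤ N (x - y) := by
        have := hN1 (x - y) y; rw [sub_add_cancel] at this; linarith
      have h2 : N y - N x ≤ N (x - y) := by
        have := hN1 (y - x) x; rw [sub_add_cancel, hsym] at this; linarith
      rw [abs_le]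
      constructor <;> [linarith [hC (x - y), hNnonneg (x - y)]; linarith [hC (x - y)]]
    exact hlip.continuous
  -- lower norm-equivalence bound via compactness
  obtain ⟨c, hc0, hc⟩ : ∃ c : ℝ, 0 < c ∧ ∀ v, c * ‖v‖ ≤ N v := by
    by_cases hd : ∀ v : EuclideanSpace ℝ (Fin d), v = 0
    · exact ⟨1, one_pos, fun v => by rw [hd v]; simp [hN0]⟩
    · push_neg at hd; obtain ⟨v₀, hv₀⟩ := hd
      have hsph : (Metric.sphere (0 : EuclideanSpace ℝ (Fin d)) 1).Nonempty := by
        refine ⟨‖v₀‖⁻¹ • v₀, ?_⟩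
        rw [mem_sphere_zero_iff_norm, norm_smul, norm_inv, norm_norm]
        exact inv_mul_cancel₀ (norm_ne_zero_iff.mpr hv₀)
      obtain ⟨w, hw, hmin⟩ :=
        (isCompact_sphere (0 : EuclideanSpace ℝ (Fin d)) 1).exists_isMinOn hsph
          hNcont.continuousOn
      have hw1 : ‖w‖ = 1 := mem_sphere_zero_iff_norm.mp hw
      have hwne : w ≠ 0 := by intro hh; rw [hh] at hw1; simp at hw1
      refine ⟨N w, lt_of_le_of_ne (hNnonneg w) fun hh => hwne ((hN3 w).mp hh.symm), fun v => ?_⟩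
      by_cases hv : v = 0
      · simp [hv, hN0, hNnonneg]
      · have hnv : (0:ℝ) < ‖v‖ := norm_pos_iff.mpr hv
        have hmem : ‖v‖⁻¹ • v ∈ Metric.sphere (0 : EuclideanSpace ℝ (Fin d)) 1 := by
          rw [mem_sphere_zero_iff_norm, norm_smul, norm_inv, norm_norm]
          exact inv_mul_cancel₀ hnv.ne'
        have h1 := hmin hmem
        simp only [Set.mem_setOf_eq] at h1
        rw [hN2, abs_inv, abs_norm] at h1
        have h2 := mul_le_mul_of_nonneg_right h1 hnv.le
        have h3 : ‖v‖⁻¹ * N v * ‖v‖ = N v := by field_simp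
        rw [h3] at h2
        linarith [h2]
  -- dual norm facts
  have hbdd : ∀ w, BddAbove ((fun v => ⟪w, v⟫) '' {v | N v ≤ 1}) := by
    intro w
    refine ⟨‖w‖ * c⁻¹, ?_⟩
    rintro r ⟨v, hv, rfl⟩
    have h1 : ‖v‖ ≤ c⁻¹ := by
      rw [← mul_le_mul_iff_right₀ hc0, mul_inv_cancel₀ hc0.ne']
      exact le_trans (hc v) hv
    calc ⟪w, v⟫ ≤ ‖w‖ * ‖v‖ := real_inner_le_norm w v
      _ ≤ ‖w‖ * c⁻¹ := mul_le_mul_of_nonneg_left h1 (norm_nonneg w)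
  have hNdge : ∀ w v, N v ≤ 1 → ⟪w, v⟫ ≤ Nd w := by
    intro w v hv; rw [hNd]; exact le_csSup (hbdd w) ⟨v, hv, rfl⟩
  have hNdnonneg : ∀ w, 0 ≤ Nd w := by
    intro w
    have := hNdge w 0 (by rw [hN0]; norm_num)
    simpa using this
  have hdual : ∀ w v, ⟪w, v⟫ ≤ Nd w * N v := by
    intro w v
    by_cases hv : v = 0
    · simp [hv, hN0]
    · have hNv : 0 < N v := lt_of_le_of_ne (hNnonneg v) fun hh => hv ((hN3 v).mp hh.symm)
      have h1 := hNdge w ((N v)⁻¹ • v)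
        (by rw [hN2, abs_of_nonneg (inv_nonneg.mpr hNv.le), inv_mul_cancel₀ hNv.ne'])
      rw [real_inner_smul_right] at h1
      have h2 := mul_le_mul_of_nonneg_right h1 hNv.le
      have h3 : (N v)⁻¹ * ⟪w, v⟫ * N v = ⟪w, v⟫ := by field_simp
      rw [h3] at h2
      linarith [h2]
  -- strong-convexity lower bound at a maximizer
  have hSC : ∀ s zz : EuclideanSpace ℝ (Fin d), (∀ x, ⟪s, x⟫ - h x ≤ ⟪s, zz⟫ - h zz) →
      ∀ x, h zz + ⟪s, x - zz⟫ + μ / 2 * (N (x - zz))^2 ≤ h x := by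
    intro s zz hmax x
    have key : ∀ t : ℝ, 0 < t → t ≤ 1 →
        ⟪s, x - zz⟫ + h zz - h x + μ / 2 * (1 - t) * (N (x - zz))^2 ≤ 0 := by
      intro t ht0 ht1
      have h1 := hmax (t • x + (1 - t) • zz)
      have h2 := hsc x zz t ⟨ht0.le, ht1⟩
      have h3 : ⟪s, t • x + (1 - t) • zz⟫ = t * ⟪s, x⟫ + (1 - t) * ⟪s, zz⟫ := by
        rw [inner_add_right, real_inner_smul_right, real_inner_smul_right]
      rw [h3] at h1
      have h4 : ⟪s, x - zz⟫ = ⟪s, x⟫ - ⟪s, zz⟫ := inner_sub_right s x zz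
      rw [h4]
      have h5 : t * (⟪s, x⟫ - ⟪s, zz⟫ - h x + h zz + μ / 2 * (1 - t) * (N (x - zz))^2) ≤ 0 := by
        nlinarith [h1, h2]
      nlinarith [h5, ht0]
    have htend : Filter.Tendsto
        (fun m : ℕ => ⟪s, x - zz⟫ + h zz - h x
          + μ / 2 * (1 - 1 / ((m : ℝ) + 1)) * (N (x - zz))^2)
        Filter.atTop
        (nhds (⟪s, x - zz⟫ + h zz - h x + μ / 2 * (1 - 0) * (N (x - zz))^2)) := by
      exact Filter.Tendsto.const_add _
        (Filter.Tendsto.mul_const _ (Filter.Tendsto.const_mul _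
          (tendsto_const_nhds.sub tendsto_one_div_add_atTop_nhds_zero_nat)))
    have hle : ⟪s, x - zz⟫ + h zz - h x + μ / 2 * (1 - 0) * (N (x - zz))^2 ≤ 0 := by
      refine le_of_tendsto htend (Filter.Eventually.of_forall fun m => ?_)
      refine key _ (by positivity) ?_
      rw [div_le_one (by positivity)]
      linarith [Nat.cast_nonneg (α := ℝ) m]
    have := hle
    norm_num at this
    linarith [this]
  -- smoothness-type bound
  have hSM : ∀ (s zz : EuclideanSpace ℝ (Fin d)) (cc : ℝ) (w : EuclideanSpace ℝ (Fin d)),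
      (∀ x, ⟪s, x⟫ - h x ≤ ⟪s, zz⟫ - h zz) →
      ∀ x, ⟪s + cc • w, x⟫ - h x ≤
        (⟪s, zz⟫ - h zz) + cc * ⟪w, zz⟫ + cc^2 / (2*μ) * (Nd w)^2 := by
    intro s zz cc w hmax x
    have hlow := hSC s zz hmax x
    have h1 : ⟪s + cc • w, x⟫ = ⟪s, x⟫ + cc * ⟪w, x⟫ := by
      rw [inner_add_left, real_inner_smul_left]
    have h2 : ⟪w, x - zz⟫ = ⟪w, x⟫ - ⟪w, zz⟫ := inner_sub_right w x zz
    have h3 : ⟪s, x - zz⟫ = ⟪s, x⟫ - ⟪s, zz⟫ := inner_sub_right s x zz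
    have habs : |⟪w, x - zz⟫| ≤ Nd w * N (x - zz) := by
      rw [abs_le]
      constructor
      · have := hdual w (-(x - zz)); rw [inner_neg_right, hNneg] at this; linarith
      · exact hdual w (x - zz)
    have h4 : cc * ⟪w, x - zz⟫ ≤ |cc| * (Nd w * N (x - zz)) := by
      calc cc * ⟪w, x - zz⟫ ≤ |cc * ⟪w, x - zz⟫| := le_abs_self _
        _ = |cc| * |⟪w, x - zz⟫| := abs_mul _ _
        _ ≤ |cc| * (Nd w * N (x - zz)) :=
            mul_le_mul_of_nonneg_left habs (abs_nonneg _)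
    have h5 : |cc| * (Nd w * N (x - zz)) ≤
        μ / 2 * (N (x - zz))^2 + cc^2 / (2*μ) * (Nd w)^2 := by
      rw [← sub_nonneg]
      have e : μ / 2 * (N (x - zz))^2 + cc^2 / (2*μ) * (Nd w)^2
          - |cc| * (Nd w * N (x - zz))
          = (μ * N (x - zz) - |cc| * Nd w)^2 / (2*μ) := by
        field_simp
        linear_combination (-(Nd w^2)) * sq_abs cc
      rw [e]
      exact div_nonneg (sq_nonneg _) (by linarith)
    rw [h1]
    rw [h2] at h4
    rw [h3] at hlow
    nlinarith [hlow, h4, h5]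
  -- main induction
  intro x
  have claim : ∀ m, m ≤ n → ∀ y,
      ⟪(-η) • (∑ i ∈ Finset.range m, a i • g i), y⟫ - h y ≤
        -h u0 - η * ∑ k ∈ Finset.range m, a k * ⟪g k, z k⟫
          + η * (η / (2 * μ)) * ∑ k ∈ Finset.range m, (a k)^2 * (Nd (g k - gprev k))^2 := by
    intro m
    induction m with
    | zero =>
      intro _ y
      simp only [Finset.range_zero, Finset.sum_empty, smul_zero, inner_zero_left, zero_sub,
        mul_zero, sub_zero, add_zero]
      linarith [hu0 y]
    | succ m ih =>
      intro hmn y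
      have hm : m < n := hmn
      have hmax := hz m hm
      have hsm := hSM ((-η) • ((∑ i ∈ Finset.range m, a i • g i) + a m • gprev m)) (z m)
        ((-η) * a m) (g m - gprev m) hmax y
      have hTe : (-η) • ((∑ i ∈ Finset.range m, a i • g i) + a m • gprev m)
          + ((-η) * a m) • (g m - gprev m)
          = (-η) • (∑ i ∈ Finset.range (m+1), a i • g i) := by
        rw [Finset.sum_range_succ]
        module
      rw [hTe] at hsm
      have hV : ⟪(-η) • ((∑ i ∈ Finset.range m, a i • g i) + a m • gprev m), z m⟫
          = ⟪(-η) • (∑ i ∈ Finset.range m, a i • g i), z m⟫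
            + ((-η) * a m) * ⟪gprev m, z m⟫ := by
        simp only [smul_add, inner_add_left, smul_smul, real_inner_smul_left]
      have ihz := ih hm.le (z m)
      have hgsplit : ⟪g m - gprev m, z m⟫ = ⟪g m, z m⟫ - ⟪gprev m, z m⟫ :=
        inner_sub_left _ _ _
      have hc2 : ((-η) * a m)^2 / (2*μ) * (Nd (g m - gprev m))^2
          = η * (η / (2 * μ)) * ((a m)^2 * (Nd (g m - gprev m))^2) := by
        field_simp
      refine le_trans hsm ?_
      rw [hV, hgsplit, hc2, Finset.sum_range_succ, Finset.sum_range_succ]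
      linarith [ihz]
  have hfin := claim n le_rfl x
  have hTx : ⟪(-η) • (∑ i ∈ Finset.range n, a i • g i), x⟫
      = -η * ∑ k ∈ Finset.range n, a k * ⟪g k, x⟫ := by
    rw [real_inner_smul_left, sum_inner]
    congr 1
    exact Finset.sum_congr rfl fun i _ => real_inner_smul_left _ _ _
  rw [hTx] at hfin
  have hzx : ∑ k ∈ Finset.range n, a k * ⟪g k, z k - x⟫
      = ∑ k ∈ Finset.range n, a k * ⟪g k, z k⟫ - ∑ k ∈ Finset.range n, a k * ⟪g k, x⟫ := by
    rw [← Finset.sum_sub_distrib]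
    exact Finset.sum_congr rfl fun k _ => by rw [inner_sub_right]; ring
  rw [hzx]
  rw [← mul_le_mul_iff_right₀ hη]
  have he : η * ((h x - h u0) / η
      + η / (2 * μ) * ∑ k ∈ Finset.range n, (a k)^2 * (Nd (g k - gprev k))^2)
      = (h x - h u0)
        + η * (η / (2 * μ)) * ∑ k ∈ Finset.range n, (a k)^2 * (Nd (g k - gprev k))^2 := by
    field_simp
  rw [he, mul_sub]
  linarith [hfin]
end

section
/- (Anytime online-to-batch) Let f be convex and differentiable, let a_0,…,a_{n−1} > 0 with A_k = Σ_{i≤k} a_i, and let sequences z^k, x^k satisfy x^0 = z^0 and x^k = (1 − a_k/A_k) x^{k−1} + (a_k/A_k) z^k for k ≥ 1 (so x^k = (1/A_k) Σ_{i=0}^{k} a_i z^i). Then for every x, A_{n−1}(f(x^{n−1}) − f(x)) ≤ Σ_{k=0}^{n−1} a_k ⟨∇f(x^k), z^k − x⟩. -/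
open RealInnerProductSpace Filter Set Topology

lemma grad_ineq {d : ℕ} (f : EuclideanSpace ℝ (Fin d) → ℝ)
    (g : EuclideanSpace ℝ (Fin d) → EuclideanSpace ℝ (Fin d))
    (hconv : ConvexOn ℝ Set.univ f)
    (hgrad : ∀ p, HasGradientAt f (g p) p)
    (u v : EuclideanSpace ℝ (Fin d)) : f u + ⟪g u, v - u⟫ ≤ f v := by
  have h1 := (hgrad u).hasFDerivAt
  have h2 : HasDerivAt (fun t : ℝ => u + t • (v - u)) (v - u) 0 := by
    simpa using ((hasDerivAt_id (0:ℝ)).smul_const (v-u)).const_add u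
  have hline : HasDerivAt (fun t : ℝ => f (u + t • (v - u))) ⟪g u, v - u⟫ 0 := by
    have h1' : HasFDerivAt f ((InnerProductSpace.toDual ℝ (EuclideanSpace ℝ (Fin d))) (g u)) (u + (0:ℝ) • (v - u)) := by simpa using h1
    have h3 := h1'.comp_hasDerivAt 0 h2
    simp at h3
    exact h3
  have key : Tendsto (slope (fun t => f (u + t • (v - u))) 0) (𝓝[>] (0:ℝ))
      (𝓝 ⟪g u, v - u⟫) :=
    (hasDerivAt_iff_tendsto_slope.mp hline).mono_left
      (nhdsWithin_mono _ (fun t ht => ne_of_gt ht))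
  have bound : ∀ᶠ t in 𝓝[>] (0:ℝ),
      slope (fun t => f (u + t • (v - u))) 0 t ≤ f v - f u := by
    filter_upwards [Ioo_mem_nhdsGT_of_mem (by norm_num : (0:ℝ) ∈ Set.Ico 0 1)] with t ht
    have ht0 : 0 < t := ht.1
    have ht1 : t < 1 := ht.2
    have hc := hconv.2 (Set.mem_univ u) (Set.mem_univ v)
      (by linarith : (0:ℝ) ≤ 1 - t) ht0.le (by ring)
    have heq : u + t • (v - u) = (1-t) • u + t • v := by
      simp [smul_sub, sub_smul]; abel
    rw [slope_def_field]
    rw [heq] at *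
    have : f ((1-t) • u + t • v) - f u ≤ t * (f v - f u) := by
      simp at hc; nlinarith
    have h0 : u + (0:ℝ) • (v - u) = u := by simp
    rw [h0, sub_zero, div_le_iff₀ ht0]
    nlinarith
  have := le_of_tendsto key bound
  linarith

/-- Anytime online-to-batch: if `f` is convex and differentiable with gradient `g`,
and `x^k` is the running weighted average of `z^0, …, z^k` (via the recursion
`x^k = (1 - a_k/A_k) x^{k-1} + (a_k/A_k) z^k`, `x^0 = z^0`), then for every `x`,
`A_{n-1} (f(x^{n-1}) - f(x)) ≤ ∑_{k<n} a_k ⟨∇f(x^k), z^k - x⟩`. -/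
theorem stmt12 {d : ℕ}
    (f : EuclideanSpace ℝ (Fin d) → ℝ)
    (g : EuclideanSpace ℝ (Fin d) → EuclideanSpace ℝ (Fin d))
    (hconv : ConvexOn ℝ Set.univ f)
    (hgrad : ∀ p, HasGradientAt f (g p) p)
    (n : ℕ) (hn : 1 ≤ n)
    (a : ℕ → ℝ) (ha : ∀ k, 0 < a k)
    (A : ℕ → ℝ) (hA : ∀ k, A k = ∑ i ∈ Finset.range (k+1), a i)
    (x z : ℕ → EuclideanSpace ℝ (Fin d))
    (hx0 : x 0 = z 0)
    (hrec : ∀ k, 1 ≤ k → x k = (1 - a k / A k) • x (k-1) + (a k / A k) • z k) :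
    ∀ p, A (n-1) * (f (x (n-1)) - f p) ≤
      ∑ k ∈ Finset.range n, a k * ⟪g (x k), z k - p⟫ := by
  intro p
  have hApos : ∀ k, 0 < A k := by
    intro k; rw [hA]
    exact Finset.sum_pos (fun i _ => ha i) ⟨0, Finset.mem_range.mpr (Nat.succ_pos k)⟩
  have hAstep : ∀ k : ℕ, A (k+1) = A k + a (k+1) := by
    intro k; rw [hA, hA, Finset.sum_range_succ]
  -- key algebraic identity
  have hkey : ∀ k : ℕ, a (k+1) • (z (k+1) - p)
      = A (k+1) • (x (k+1) - p) - A k • (x k - p) := by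
    intro k
    have hAne : A (k+1) ≠ 0 := (hApos (k+1)).ne'
    have hx := hrec (k+1) (Nat.le_add_left 1 k)
    simp only [Nat.add_sub_cancel] at hx
    have h1 : A (k+1) • x (k+1) = A k • x k + a (k+1) • z (k+1) := by
      rw [hx, smul_add, smul_smul, smul_smul]
      have e1 : A (k+1) * (1 - a (k+1) / A (k+1)) = A k := by
        field_simp; linarith [hAstep k]
      have e2 : A (k+1) * (a (k+1) / A (k+1)) = a (k+1) := by field_simp
      rw [e1, e2]
    have h2 : a (k+1) = A (k+1) - A k := by linarith [hAstep k]
    rw [h2] at h1 ⊢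
    linear_combination (norm := module) (-1 : ℝ) • h1
  -- inductive step bound
  have hstep : ∀ k : ℕ,
      A (k+1) * (f (x (k+1)) - f p)
        ≤ A k * (f (x k) - f p) + a (k+1) * ⟪g (x (k+1)), z (k+1) - p⟫ := by
    intro k
    have hinner : a (k+1) * ⟪g (x (k+1)), z (k+1) - p⟫
        = A (k+1) * ⟪g (x (k+1)), x (k+1) - p⟫ - A k * ⟪g (x (k+1)), x k - p⟫ := by
      rw [← real_inner_smul_right, hkey k, inner_sub_right,
        real_inner_smul_right, real_inner_smul_right]
    set I1 := ⟪g (x (k+1)), x (k+1) - p⟫ with hI1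
    set I2 := ⟪g (x (k+1)), x k - p⟫ with hI2
    have hg1 : f (x (k+1)) + ⟪g (x (k+1)), p - x (k+1)⟫ ≤ f p :=
      grad_ineq f g hconv hgrad _ _
    have hg2 : f (x (k+1)) + ⟪g (x (k+1)), x k - x (k+1)⟫ ≤ f (x k) :=
      grad_ineq f g hconv hgrad _ _
    have e1 : ⟪g (x (k+1)), p - x (k+1)⟫ = -I1 := by
      rw [hI1, ← inner_neg_right]; congr 1; abel
    have e2 : I2 = ⟪g (x (k+1)), x k - x (k+1)⟫ + I1 := by
      rw [hI1, hI2, ← inner_add_right]; congr 1; abel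
    set I3 := ⟪g (x (k+1)), x k - x (k+1)⟫
    rw [e1] at hg1
    have hAk := hApos k
    have hak := ha (k+1)
    have hAs := hAstep k
    rw [hinner]
    nlinarith [mul_le_mul_of_nonneg_left (show f (x (k+1)) - f p ≤ I1 by linarith)
        (le_of_lt hak),
      mul_le_mul_of_nonneg_left (show f (x (k+1)) - f (x k) ≤ -I3 by linarith)
        (le_of_lt hAk)]
  -- induction
  induction n, hn using Nat.le_induction with
  | base =>
    simp only [Nat.sub_self, Finset.sum_range_one]
    have hg1 : f (x 0) + ⟪g (x 0), p - x 0⟫ ≤ f p := grad_ineq f g hconv hgrad _ _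
    have e1 : ⟪g (x 0), p - x 0⟫ = -⟪g (x 0), z 0 - p⟫ := by
      rw [← inner_neg_right, hx0]; congr 1; abel
    rw [e1] at hg1
    have hA0 : A 0 = a 0 := by rw [hA]; simp
    rw [hA0]
    nlinarith [ha 0]
  | succ m hm ih =>
    rw [Finset.sum_range_succ]
    simp only [Nat.add_sub_cancel]
    have := hstep (m - 1)
    have hm1 : m - 1 + 1 = m := Nat.sub_add_cancel hm
    rw [hm1] at this
    calc A m * (f (x m) - f p)
        ≤ A (m-1) * (f (x (m-1)) - f p) + a m * ⟪g (x m), z m - p⟫ := this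
      _ ≤ (∑ k ∈ Finset.range m, a k * ⟪g (x k), z k - p⟫) + a m * ⟪g (x m), z m - p⟫ := by
          linarith [ih]
end
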